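/- Let γ₁, γ₂ : (0,∞) → (0,∞) with B_{γ₁} = B_{γ₂}, and assume γ₂/γ₁ is Lebesgue measurable (or continuous at a point). Then there exists a unique c ∈ ℝ such that γ₂(x) = e^(cx) γ₁(x) for all x > 0. -/

import Mathlib

open MeasureTheory Pointwise

theorem measurable_cauchy_linear (f : ℝ → ℝ) (hf : Measurable f)
    (hadd : ∀ x y : ℝ, f (x + y) = f x + f y) : ∀ x : ℝ, f x = f 1 * x := by
  set F : ℝ →+ ℝ := AddMonoidHom.mk' f (fun a b => hadd a b) with hF
  have hFf : ∀ x, F x = f x := fun x => rfl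
  have hnat : ∀ (n : ℕ) (x : ℝ), f ((n : ℝ) * x) = n * f x := by
    intro n x
    have := map_nsmul F n x
    simpa [hFf, nsmul_eq_mul] using this
  have hrat : ∀ q : ℚ, f (q : ℝ) = (q : ℝ) * f 1 := by
    intro q
    have := map_ratCast_smul F ℝ ℝ q (1 : ℝ)
    simpa [hFf, smul_eq_mul] using this
  -- find a bound near zero
  obtain ⟨N, hN⟩ : ∃ N : ℕ, 0 < volume {x | x ∈ Set.Icc (0:ℝ) 1 ∧ |f x| ≤ N} := by
    by_contra h
    push_neg at h
    simp only [le_zero_iff] at h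
    have hcover : Set.Icc (0:ℝ) 1 ⊆ ⋃ N : ℕ, {x | x ∈ Set.Icc (0:ℝ) 1 ∧ |f x| ≤ N} := by
      intro x hx
      obtain ⟨N, hN⟩ := exists_nat_ge (|f x|)
      exact Set.mem_iUnion.2 ⟨N, hx, hN⟩
    have h0 : volume (Set.Icc (0:ℝ) 1) = 0 :=
      le_antisymm ((measure_mono hcover).trans (measure_iUnion_null h).le) zero_le
    simp [Real.volume_Icc] at h0
  set A : Set ℝ := {x | x ∈ Set.Icc (0:ℝ) 1 ∧ |f x| ≤ N} with hA
  have hAmeas : MeasurableSet A := by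
    apply (measurableSet_Icc.inter _)
    exact measurableSet_le hf.abs measurable_const
  have hSub : A - A ∈ nhds (0 : ℝ) :=
    MeasureTheory.Measure.sub_mem_nhds_zero_of_addHaar_pos volume A hAmeas hN
  obtain ⟨δ, hδpos, hδ⟩ := Metric.mem_nhds_iff.1 hSub
  have hbound : ∀ z : ℝ, |z| < δ → |f z| ≤ 2 * N := by
    intro z hz
    have : z ∈ A - A := hδ (by simpa [Real.dist_eq] using hz)
    obtain ⟨a, ha, b, hb, rfl⟩ := this
    have : f (a - b) = f a - f b := by
      have := hadd (a - b) b
      simp at this; linarith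
    rw [this]
    calc |f a - f b| ≤ |f a| + |f b| := abs_sub _ _
      _ ≤ N + N := add_le_add ha.2 hb.2
      _ = 2 * N := by ring
  -- small bound near zero
  have hsmall : ∀ ε : ℝ, 0 < ε → ∃ δ' > 0, ∀ z : ℝ, |z| < δ' → |f z| ≤ ε := by
    intro ε hε
    obtain ⟨n, hn⟩ := exists_nat_gt ((2 * N) / ε)
    have hn0 : 0 < (n : ℝ) := lt_of_le_of_lt (div_nonneg (by positivity) hε.le) hn
    refine ⟨δ / n, by positivity, fun z hz => ?_⟩
    have h1 : |(n : ℝ) * z| < δ := by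
      rw [abs_mul, abs_of_nonneg hn0.le]
      calc (n : ℝ) * |z| < n * (δ / n) := by
            exact mul_lt_mul_of_pos_left hz hn0
        _ = δ := by field_simp
    have h2 := hbound _ h1
    rw [hnat n z, abs_mul, abs_of_nonneg hn0.le] at h2
    have : |f z| ≤ 2 * N / n := by
      rw [le_div_iff₀ hn0]; linarith
    calc |f z| ≤ 2 * N / n := this
      _ ≤ ε := by
        rw [div_le_iff₀ hn0]
        have := (div_lt_iff₀ hε).1 hn
        linarith
  -- conclude
  intro x
  have key : ∀ ε : ℝ, 0 < ε → |f x - f 1 * x| ≤ ε := by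
    intro ε hε
    obtain ⟨δ', hδ'pos, hδ'⟩ := hsmall (ε / 2) (by positivity)
    set r : ℝ := min δ' (ε / (2 * (|f 1| + 1))) with hr
    have hrpos : 0 < r := lt_min hδ'pos (by positivity)
    obtain ⟨q, hq⟩ := exists_rat_near x hrpos
    have hfx : f x = f (x - q) + (q : ℝ) * f 1 := by
      have := hadd (x - q) q
      rw [hrat q] at this
      simp at this
      linarith
    have h1 : |f (x - q)| ≤ ε / 2 := hδ' _ (lt_of_lt_of_le hq (min_le_left _ _))
    have h2 : |x - q| * |f 1| ≤ ε / 2 := by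
      have hxr : |x - q| ≤ ε / (2 * (|f 1| + 1)) := (lt_of_lt_of_le hq (min_le_right _ _)).le
      calc |x - q| * |f 1| ≤ (ε / (2 * (|f 1| + 1))) * (|f 1| + 1) := by
            apply mul_le_mul hxr (by linarith [abs_nonneg (f 1)]) (abs_nonneg _)
            positivity
        _ ≤ ε / 2 := by
            rw [div_mul_eq_mul_div, div_le_div_iff₀ (by positivity) (by norm_num)]
            nlinarith [abs_nonneg (f 1)]
    have : f x - f 1 * x = f (x - q) + ((q : ℝ) - x) * f 1 := by rw [hfx]; ring
    rw [this]
    calc |f (x - q) + ((q : ℝ) - x) * f 1| ≤ |f (x - q)| + |((q : ℝ) - x) * f 1| :=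
          abs_add_le _ _
      _ ≤ ε / 2 + |x - q| * |f 1| := by
          rw [abs_mul, abs_sub_comm]
          exact add_le_add h1 le_rfl
      _ ≤ ε := by linarith
  by_contra hne
  have h0 : 0 < |f x - f 1 * x| := abs_pos.2 (sub_ne_zero.2 hne)
  have := key (|f x - f 1 * x| / 2) (by positivity)
  linarith

theorem beta_type_eq_exponential (γ₁ γ₂ : ℝ → ℝ)
    (h₁ : ∀ x : ℝ, 0 < x → 0 < γ₁ x) (h₂ : ∀ x : ℝ, 0 < x → 0 < γ₂ x)
    (heq : ∀ x y : ℝ, 0 < x → 0 < y →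
      γ₁ x * γ₁ y / γ₁ (x + y) = γ₂ x * γ₂ y / γ₂ (x + y))
    (hmeas : Measurable fun x => γ₂ x / γ₁ x) :
    ∃! c : ℝ, ∀ x : ℝ, 0 < x → γ₂ x = Real.exp (c * x) * γ₁ x := by
  set m : ℝ → ℝ := fun x => γ₂ x / γ₁ x with hm
  have hmpos : ∀ x : ℝ, 0 < x → 0 < m x := fun x hx => div_pos (h₂ x hx) (h₁ x hx)
  have hmul : ∀ x y : ℝ, 0 < x → 0 < y → m (x + y) = m x * m y := by
    intro x y hx hy
    have hxy : 0 < x + y := by linarith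
    have e := heq x y hx hy
    have n1 := (h₁ x hx).ne'; have n2 := (h₁ y hy).ne'; have n3 := (h₁ (x+y) hxy).ne'
    have n4 := (h₂ x hx).ne'; have n5 := (h₂ y hy).ne'; have n6 := (h₂ (x+y) hxy).ne'
    rw [div_eq_div_iff n3 n6] at e
    show γ₂ (x + y) / γ₁ (x + y) = γ₂ x / γ₁ x * (γ₂ y / γ₁ y)
    rw [div_mul_div_comm, div_eq_div_iff n3 (mul_ne_zero n1 n2)]
    linarith [e]
  set g : ℝ → ℝ := fun x => if 0 < x then Real.log (m x) else 0 with hg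
  have hgval : ∀ x : ℝ, 0 < x → g x = Real.log (m x) := fun x hx => if_pos hx
  have hgadd : ∀ x y : ℝ, 0 < x → 0 < y → g (x + y) = g x + g y := by
    intro x y hx hy
    rw [hgval x hx, hgval y hy, hgval (x + y) (by linarith), hmul x y hx hy,
      Real.log_mul (hmpos x hx).ne' (hmpos y hy).ne']
  have hgmeas : Measurable g := by
    apply Measurable.ite (measurableSet_lt measurable_const measurable_id)
    · exact hmeas.log
    · exact measurable_const
  -- independence of the shift
  have hind : ∀ x a b : ℝ, 0 < a → 0 < x + a → 0 < b → 0 < x + b →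
      g (x + a) - g a = g (x + b) - g b := by
    intro x a b ha hxa hb hxb
    have e1 : g (x + a + b) = g (x + a) + g b := hgadd _ _ hxa hb
    have e2 : g (x + b + a) = g (x + b) + g a := hgadd _ _ hxb ha
    have : x + a + b = x + b + a := by ring
    rw [this] at e1
    linarith
  set F : ℝ → ℝ := fun x => g (x + (2 + |x|)) - g (2 + |x|) with hF
  have hFval : ∀ (x a : ℝ), 0 < a → 0 < x + a → F x = g (x + a) - g a := by
    intro x a ha hxa
    exact hind x (2 + |x|) a (by positivity) (by nlinarith [abs_nonneg x, neg_abs_le x]) ha hxa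
  have hFmeas : Measurable F := by
    apply Measurable.sub
    · exact hgmeas.comp (by fun_prop)
    · exact hgmeas.comp (by fun_prop)
  have hFadd : ∀ x y : ℝ, F (x + y) = F x + F y := by
    intro x y
    set a : ℝ := 2 + |x| + |y| with ha
    have hax : 0 < x + a := by have := neg_abs_le x; have := abs_nonneg y; simp only [ha]; linarith
    have hay : 0 < y + a := by have := neg_abs_le y; have := abs_nonneg x; simp only [ha]; linarith
    have ha0 : 0 < a := by positivity
    have hxy2a : 0 < x + y + (a + a) := by linarith
    have e1 : F (x + y) = g (x + y + (a + a)) - g (a + a) := hFval _ _ (by linarith) hxy2a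
    have e2 : F x = g (x + a) - g a := hFval _ _ ha0 hax
    have e3 : F y = g (y + a) - g a := hFval _ _ ha0 hay
    have e4 : g (x + y + (a + a)) = g (x + a) + g (y + a) := by
      have : x + y + (a + a) = (x + a) + (y + a) := by ring
      rw [this]; exact hgadd _ _ hax hay
    have e5 : g (a + a) = g a + g a := hgadd _ _ ha0 ha0
    rw [e1, e2, e3, e4, e5]; ring
  have hFg : ∀ x : ℝ, 0 < x → F x = g x := by
    intro x hx
    have h1 : F x = g (x + 1) - g 1 := hFval x 1 one_pos (by linarith)
    rw [h1, hgadd x 1 hx one_pos]; ring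
  have hlin := measurable_cauchy_linear F hFmeas hFadd
  refine ⟨F 1, ?_, ?_⟩
  · intro x hx
    have : g x = F 1 * x := by rw [← hFg x hx]; exact hlin x
    rw [hgval x hx] at this
    have hmx : m x = Real.exp (F 1 * x) := by
      rw [← this, Real.exp_log (hmpos x hx)]
    have hx1 := (h₁ x hx).ne'
    rw [hm] at hmx
    rw [div_eq_iff hx1] at hmx
    linarith [hmx]
  · intro c hc
    have e1 := hc 1 one_pos
    have e2 : γ₂ 1 = Real.exp (F 1 * 1) * γ₁ 1 := by
      have : g 1 = F 1 * 1 := by rw [← hFg 1 one_pos]; exact hlin 1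
      rw [hgval 1 one_pos] at this
      have hm1 : m 1 = Real.exp (F 1 * 1) := by rw [← this, Real.exp_log (hmpos 1 one_pos)]
      rw [hm] at hm1
      rw [div_eq_iff (h₁ 1 one_pos).ne'] at hm1
      linarith [hm1]
    have h10 := (h₁ 1 one_pos).ne'
    have : Real.exp (c * 1) = Real.exp (F 1 * 1) := by
      have := e1.symm.trans e2
      exact mul_right_cancel₀ h10 this
    have := Real.exp_injective this
    simpa using this
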